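/- The Baumslag group Γ = (Z[Z₁^{±1},Z₂^{±1}]/(1+Z₁-Z₂)) ⋊ Z² has commutator width exactly 1: every element of its derived subgroup is a single commutator, and Γ is not abelian. -/

import Mathlib

open MonoidAlgebra
open scoped commutatorElement

/-- `AddAut A` as multiplicative automorphisms of `Multiplicative A`. -/
def addAutToMulAut (A : Type*) [AddGroup A] : Multiplicative (AddAut A) →* MulAut (Multiplicative A) where
  toFun e := AddEquiv.toMultiplicative e.toAdd
  map_one' := rfl
  map_mul' _ _ := rfl

/-- The action of `B` on (the additive group of) a commutative ring `R`
through a homomorphism `ψ : B →* Rˣ`, by multiplication. -/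
def ringMulAction {R : Type*} [CommRing R] {B : Type*} [CommGroup B] (ψ : B →* Rˣ) :
    B →* MulAut (Multiplicative R) :=
  (addAutToMulAut R).comp (AddAut.mulLeft.comp ψ)

/-- The semidirect product `R ⋊ B` where `B` acts on the additive group of the
commutative ring `R` by multiplication via `ψ : B →* Rˣ`. -/
abbrev RingSemidirect (R : Type*) [CommRing R] {B : Type*} [CommGroup B] (ψ : B →* Rˣ) :=
  SemidirectProduct (Multiplicative R) B (ringMulAction ψ)

/-- The element `(f, b)` of `R ⋊ B`. -/
abbrev RingSemidirect.mk {R : Type*} [CommRing R] {B : Type*} [CommGroup B] (ψ : B →* Rˣ)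
    (f : R) (b : B) : RingSemidirect R ψ :=
  ⟨Multiplicative.ofAdd f, b⟩

/-- The canonical homomorphism `B →* (ℤ[B])ˣ`, sending `b` to the monomial `Z^b`. -/
noncomputable abbrev zUnits (B : Type*) [CommGroup B] : B →* (MonoidAlgebra ℤ B)ˣ :=
  (MonoidAlgebra.of ℤ B).toHomUnits

/-- The wreath product `ℤ ≀ B`, realized as `ℤ[B] ⋊ B` with `B` acting by multiplication
by monomials. -/
abbrev ZWreath (B : Type*) [CommGroup B] := RingSemidirect (MonoidAlgebra ℤ B) (zUnits B)

/-- The element `(f, b)` of `ℤ ≀ B = ℤ[B] ⋊ B`. -/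
noncomputable abbrev ZWreath.mk {B : Type*} [CommGroup B] (f : MonoidAlgebra ℤ B) (b : B) : ZWreath B :=
  RingSemidirect.mk (zUnits B) f b


noncomputable section

/-- `ℤ²`, written multiplicatively. -/
abbrev B2 := Multiplicative (Fin 2 → ℤ)

/-- The Laurent monomial `Z₁`. -/
abbrev Z1 : MonoidAlgebra ℤ B2 :=
  MonoidAlgebra.of ℤ B2 (Multiplicative.ofAdd (Pi.single 0 1))

/-- The Laurent monomial `Z₂`. -/
abbrev Z2 : MonoidAlgebra ℤ B2 :=
  MonoidAlgebra.of ℤ B2 (Multiplicative.ofAdd (Pi.single 1 1))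

/-- The ideal `(1 + Z₁ - Z₂)` of `ℤ[Z₁^{±1}, Z₂^{±1}]`. -/
abbrev baumslagIdeal : Ideal (MonoidAlgebra ℤ B2) := Ideal.span {1 + Z1 - Z2}

/-- The ring `ℤ[Z₁^{±1}, Z₂^{±1}]/(1 + Z₁ - Z₂)`. -/
abbrev BaumslagRing := MonoidAlgebra ℤ B2 ⧸ baumslagIdeal

/-- The action of `ℤ²` on the Baumslag ring by multiplication by `Z₁` and `Z₂`. -/
abbrev baumslagUnits : B2 →* BaumslagRingˣ :=
  (Units.map (Ideal.Quotient.mk baumslagIdeal).toMonoidHom).comp (zUnits B2)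

/-- The Baumslag group, realized as `(ℤ[Z₁^{±1}, Z₂^{±1}]/(1 + Z₁ - Z₂)) ⋊ ℤ²`. -/
abbrev BaumslagGroup := RingSemidirect BaumslagRing baumslagUnits

/-- The element `(f, b)` of the Baumslag group. -/
abbrev BaumslagGroup.mk (f : BaumslagRing) (b : B2) : BaumslagGroup :=
  RingSemidirect.mk baumslagUnits f b

/-- The relators `[t,u]`, `[a, a^t]`, `a^u·(a·a^t)⁻¹` of the Baumslag presentation, on
generators `a = 0`, `t = 1`, `u = 2`. -/
def baumslagRels : Set (FreeGroup (Fin 3)) :=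
  let a : FreeGroup (Fin 3) := FreeGroup.of 0
  let t : FreeGroup (Fin 3) := FreeGroup.of 1
  let u : FreeGroup (Fin 3) := FreeGroup.of 2
  { ⁅t, u⁆, ⁅a, t⁻¹ * a * t⁆, u⁻¹ * a * u * (a * (t⁻¹ * a * t))⁻¹ }

end

noncomputable section BaumslagAux

/-- Evaluation `Z₁ ↦ 1, Z₂ ↦ 2` on the group `ℤ²`. -/
def bmhom : B2 →* ℚ where
  toFun b := 2 ^ (Multiplicative.toAdd b 1)
  map_one' := by simp
  map_mul' x y := by
    show (2 : ℚ) ^ ((Multiplicative.toAdd x + Multiplicative.toAdd y) 1) = _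
    rw [Pi.add_apply, zpow_add₀ (two_ne_zero)]

/-- Evaluation `Z₁ ↦ 1, Z₂ ↦ 2` on the Laurent polynomial ring. -/
def bpi : MonoidAlgebra ℤ B2 →ₐ[ℤ] ℚ := MonoidAlgebra.lift ℤ ℚ B2 bmhom

lemma bpi_of (b : B2) : bpi (MonoidAlgebra.of ℤ B2 b) = bmhom b := by
  simp [bpi, MonoidAlgebra.lift_of]

lemma bpi_Z1 : bpi Z1 = 1 := by
  rw [bpi_of]
  simp only [bmhom, MonoidHom.coe_mk, OneHom.coe_mk, toAdd_ofAdd]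
  rw [Pi.single_eq_of_ne (by decide : (1 : Fin 2) ≠ 0), zpow_zero]

lemma bpi_Z2 : bpi Z2 = 2 := by
  rw [bpi_of]
  simp only [bmhom, MonoidHom.coe_mk, OneHom.coe_mk, toAdd_ofAdd]
  rw [Pi.single_eq_same, zpow_one]

/-- `1 ≠ Z₂` in the Baumslag ring. -/
lemma one_ne_qZ2 : (1 : BaumslagRing) ≠ Ideal.Quotient.mk baumslagIdeal Z2 := by
  intro h
  have h' : Ideal.Quotient.mk baumslagIdeal Z2 = Ideal.Quotient.mk baumslagIdeal 1 := by
    rw [map_one]; exact h.symm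
  have hmem : Z2 - 1 ∈ baumslagIdeal := (Ideal.Quotient.mk_eq_mk_iff_sub_mem Z2 1).mp h'

  rw [Ideal.mem_span_singleton] at hmem
  obtain ⟨c, hc⟩ := hmem
  have := congrArg bpi hc
  rw [map_sub, map_one, map_mul, map_sub, map_add, map_one, bpi_Z1, bpi_Z2] at this
  norm_num at this

/-- The relation `Z₂ = 1 + Z₁` in the Baumslag ring. -/
lemma qZ2_eq : Ideal.Quotient.mk baumslagIdeal Z2 = 1 + Ideal.Quotient.mk baumslagIdeal Z1 := by
  have h0 : Ideal.Quotient.mk baumslagIdeal (1 + Z1 - Z2) = 0 :=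
    Ideal.Quotient.eq_zero_iff_mem.mpr (Ideal.subset_span rfl)
  rw [map_sub, map_add, map_one, sub_eq_zero] at h0
  exact h0.symm

abbrev c1 : B2 := Multiplicative.ofAdd (Pi.single 0 1)
abbrev c2 : B2 := Multiplicative.ofAdd (Pi.single 1 1)

lemma bunits_c1 : ((baumslagUnits c1 : BaumslagRingˣ) : BaumslagRing)
    = Ideal.Quotient.mk baumslagIdeal Z1 := rfl

lemma bunits_c2 : ((baumslagUnits c2 : BaumslagRingˣ) : BaumslagRing)
    = Ideal.Quotient.mk baumslagIdeal Z2 := rfl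

lemma mk_eq_inl (a : BaumslagRing) :
    BaumslagGroup.mk a 1 = SemidirectProduct.inl (Multiplicative.ofAdd a) := rfl

lemma mk_eq_inr (c : B2) : BaumslagGroup.mk 0 c = SemidirectProduct.inr c := by
  ext
  · rfl
  · rfl

/-- Commutator formula: `⁅(a,1),(0,c)⁆ = (a - ψ(c)·a, 1)`. -/
lemma comm_mk (a : BaumslagRing) (c : B2) :
    ⁅BaumslagGroup.mk a 1, BaumslagGroup.mk 0 c⁆ =
      BaumslagGroup.mk (a - (baumslagUnits c : BaumslagRingˣ) * a) 1 := by
  rw [mk_eq_inl, mk_eq_inr, commutatorElement_def,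
    ← map_inv (SemidirectProduct.inl (φ := ringMulAction baumslagUnits)),
    ← map_inv (SemidirectProduct.inr (φ := ringMulAction baumslagUnits)),
    mul_assoc, mul_assoc, ← mul_assoc (SemidirectProduct.inr c),
    ← SemidirectProduct.inl_aut, ← map_mul, mk_eq_inl]
  congr 1
  show Multiplicative.ofAdd (a + ((baumslagUnits c : BaumslagRingˣ) : BaumslagRing) * (-a)) =
    Multiplicative.ofAdd (a - ((baumslagUnits c : BaumslagRingˣ) : BaumslagRing) * a)
  exact congrArg Multiplicative.ofAdd (by ring)


end BaumslagAux

/-- The Baumslag group `(ℤ[Z₁^{±1},Z₂^{±1}]/(1+Z₁-Z₂)) ⋊ ℤ²` has commutator width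
exactly `1`: every element of its derived subgroup is a single commutator, and the group
is not abelian. -/
theorem baumslag_commutatorWidth_one :
    (∀ x ∈ commutator BaumslagGroup, ∃ g h : BaumslagGroup, x = ⁅g, h⁆) ∧
    (∃ g h : BaumslagGroup, g * h ≠ h * g) := by
  constructor
  · intro x hx
    -- the right component of x is 1
    have hright : x.right = 1 := by
      have hle : commutator BaumslagGroup ≤ (SemidirectProduct.rightHom :
          BaumslagGroup →* B2).ker := by
        rw [commutator, Subgroup.commutator_le]
        intro g _ h _
        rw [MonoidHom.mem_ker, map_commutatorElement]
        exact commutatorElement_eq_one_iff_mul_comm.mpr (mul_comm _ _)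
      exact hle hx
    set f : BaumslagRing := Multiplicative.toAdd x.left with hf
    have hx_eq : x = BaumslagGroup.mk f 1 := by
      ext
      · rfl
      · exact congrFun (congrArg Multiplicative.toAdd hright) _
    set u : BaumslagRingˣ := baumslagUnits c1 with hu
    set a : BaumslagRing := -(((u⁻¹ : BaumslagRingˣ) : BaumslagRing) * f) with ha
    refine ⟨BaumslagGroup.mk a 1, BaumslagGroup.mk 0 c2, ?_⟩
    rw [comm_mk, hx_eq]
    congr 1
    show f = a - ((baumslagUnits c2 : BaumslagRingˣ) : BaumslagRing) * a
    rw [bunits_c2, qZ2_eq, ← bunits_c1, ← hu, ha]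
    have huv : (u : BaumslagRing) * ((u⁻¹ : BaumslagRingˣ) : BaumslagRing) = 1 := u.mul_inv
    linear_combination -f * huv
  · refine ⟨BaumslagGroup.mk 1 1, BaumslagGroup.mk 0 c2, ?_⟩
    intro h
    have hleft := congrArg SemidirectProduct.left h
    have h1 : (BaumslagGroup.mk 1 1 * BaumslagGroup.mk 0 c2).left =
        Multiplicative.ofAdd (1 : BaumslagRing) := by
      show Multiplicative.ofAdd ((1 : BaumslagRing) +
        ((baumslagUnits (1 : B2) : BaumslagRingˣ) : BaumslagRing) * 0) =
        Multiplicative.ofAdd (1 : BaumslagRing)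
      rw [mul_zero, add_zero]
    have h2 : (BaumslagGroup.mk 0 c2 * BaumslagGroup.mk 1 1).left =
        Multiplicative.ofAdd (Ideal.Quotient.mk baumslagIdeal Z2) := by
      show Multiplicative.ofAdd ((0 : BaumslagRing) +
        ((baumslagUnits c2 : BaumslagRingˣ) : BaumslagRing) * 1) =
        Multiplicative.ofAdd (Ideal.Quotient.mk baumslagIdeal Z2)
      rw [mul_one, zero_add, bunits_c2]
    rw [h1, h2] at hleft
    exact one_ne_qZ2 (Multiplicative.ofAdd.injective hleft)
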